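/- Let A be a commutative ring containing ℚ and let H₀ be a nilpotent n×n matrix over A. Define ∇ : A[[x]]ⁿ → A[[x]]ⁿ by ∇(v) = x·v′ + H₀·v, where v′ is the entrywise formal derivative. Then the set {v ∈ A[[x]]ⁿ : ∇^N(v) = 0 for some N ∈ ℕ} is exactly Aⁿ, the set of vectors all of whose entries are constant power series. -/

import Mathlib

open PowerSeries

private lemma coeff_X_mul_deriv {A : Type*} [CommRing A] (f : PowerSeries A) (k : ℕ) :
    coeff k (X * derivative A f) = (k : A) * coeff k f := by
  cases k with
  | zero => simp
  | succ m =>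
      rw [PowerSeries.coeff_succ_X_mul, PowerSeries.coeff_derivative]
      push_cast; ring

private lemma key_coeff {A : Type*} [CommRing A] {n : ℕ}
    (H₀ : Matrix (Fin n) (Fin n) A)
    (D : (Fin n → PowerSeries A) → (Fin n → PowerSeries A))
    (hD : ∀ (v : Fin n → PowerSeries A) (i : Fin n),
      D v i = PowerSeries.X * PowerSeries.derivative A (v i)
        + (H₀.map ((PowerSeries.C : A →+* PowerSeries A))).mulVec v i)
    (k N : ℕ) (v : Fin n → PowerSeries A) :
    (fun i => coeff k (D^[N] v i))
      = (((k : A) • (1 : Matrix (Fin n) (Fin n) A) + H₀) ^ N).mulVec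
          (fun i => coeff k (v i)) := by
  induction N with
  | zero => simp [Matrix.one_mulVec]
  | succ N ih =>
      funext i
      rw [Function.iterate_succ_apply', hD, map_add, coeff_X_mul_deriv]
      have h2 : coeff k ((H₀.map ((PowerSeries.C : A →+* PowerSeries A))).mulVec (D^[N] v) i)
          = H₀.mulVec (fun j => coeff k (D^[N] v j)) i := by
        simp [Matrix.mulVec, dotProduct, map_sum]
      rw [h2]
      have := congrFun ih
      rw [pow_succ']
      rw [← Matrix.mulVec_mulVec, Matrix.add_mulVec, Matrix.smul_mulVec,
        Matrix.one_mulVec]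
      simp only [Pi.add_apply, Pi.smul_apply, smul_eq_mul, this, ih]

/-- Let `A` be a commutative ring containing `ℚ` and `H₀` a nilpotent `n × n`
matrix over `A`. Define `D : A⟦x⟧ⁿ → A⟦x⟧ⁿ` by `D v = x • v' + H₀ ⬝ v`. Then the set of vectors
killed by some iterate of `D` is exactly the set of vectors with constant entries. -/
theorem stmt2 (A : Type*) [CommRing A] [Algebra ℚ A] (n : ℕ)
    (H₀ : Matrix (Fin n) (Fin n) A) (hH₀ : IsNilpotent H₀)
    (D : (Fin n → PowerSeries A) → (Fin n → PowerSeries A))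
    (hD : ∀ (v : Fin n → PowerSeries A) (i : Fin n),
      D v i = PowerSeries.X * PowerSeries.derivative A (v i)
        + (H₀.map ((PowerSeries.C : A →+* PowerSeries A))).mulVec v i) :
    {v : Fin n → PowerSeries A | ∃ N : ℕ, D^[N] v = 0}
      = {v : Fin n → PowerSeries A | ∀ i, v i ∈ Set.range ((PowerSeries.C : A →+* PowerSeries A))} := by
  ext v
  simp only [Set.mem_setOf_eq]
  constructor
  · rintro ⟨N, hN⟩ i
    refine ⟨coeff 0 (v i), ?_⟩
    ext k
    rcases Nat.eq_zero_or_pos k with rfl | hk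
    · simp
    -- for k ≥ 1 the coefficient vector vanishes
    have hkey := key_coeff H₀ D hD k N v
    rw [hN] at hkey
    have hzero : (((k : A) • (1 : Matrix (Fin n) (Fin n) A) + H₀) ^ N).mulVec
        (fun i => coeff k (v i)) = 0 := by
      rw [← hkey]; funext i; simp
    -- the matrix is invertible
    have hkA : IsUnit (k : A) := by
      have : (k : A) = algebraMap ℚ A (k : ℚ) := by push_cast; simp
      rw [this]
      exact (IsUnit.map (algebraMap ℚ A)) (isUnit_iff_ne_zero.mpr (by exact_mod_cast hk.ne'))
    have hunit : IsUnit ((k : A) • (1 : Matrix (Fin n) (Fin n) A) + H₀) := by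
      rw [add_comm]
      refine IsNilpotent.isUnit_add_right_of_commute hH₀ ?_ ?_
      · have : (k : A) • (1 : Matrix (Fin n) (Fin n) A)
            = algebraMap A (Matrix (Fin n) (Fin n) A) (k : A) := by
          rw [Algebra.algebraMap_eq_smul_one]
        rw [this]
        exact hkA.map (algebraMap A (Matrix (Fin n) (Fin n) A))
      · exact (Commute.one_right H₀).smul_right _
    have hunitN := hunit.pow N
    obtain ⟨B, hB⟩ := hunitN.exists_left_inv
    have : (fun i => coeff k (v i)) = 0 := by
      have := congrArg (B.mulVec ·) hzero
      simpa [Matrix.mulVec_mulVec, hB, Matrix.one_mulVec] using this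
    rw [PowerSeries.coeff_C, if_neg hk.ne']
    exact (by simpa using congrFun this i : coeff k (v i) = 0).symm
  · rintro hv
    choose a ha using hv
    obtain ⟨N, hN⟩ := hH₀
    refine ⟨N, ?_⟩
    funext i
    ext k
    have hkey := congrFun (key_coeff H₀ D hD k N v) i
    rcases Nat.eq_zero_or_pos k with rfl | hk
    · rw [hkey]
      simp only [zero_smul, Nat.cast_zero, zero_add] at hkey ⊢
      rw [hN]
      simp
    · rw [hkey]
      have : (fun i => coeff k (v i)) = 0 := by
        funext j
        rw [← ha j, PowerSeries.coeff_C, if_neg hk.ne']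
        rfl
      rw [this, Matrix.mulVec_zero]
      simp
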